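/- Let s, t ∈ [-1, 1] and let p(x) = (x - 1)(x - s)(x - t)(x + 1). Then p has a hyperbolic antiderivative (i.e. there exists a real polynomial P with P' = p all of whose complex roots are real) if and only if s·t ≥ -1/5. -/

import Mathlib

open Polynomial

/-- A real polynomial is hyperbolic if all of its complex roots are real. -/
def Hyperbolic (p : Polynomial ℝ) : Prop :=
  ∀ z ∈ (p.map (algebraMap ℝ ℂ)).roots, z.im = 0

noncomputable def Fp (s t : ℝ) : ℝ[X] :=
  C (1/5) * X^5 - C ((s+t)/4) * X^4 + C ((s*t-1)/3) * X^3 + C ((s+t)/2) * X^2 - C (s*t) * X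

lemma deriv_Fp (s t : ℝ) :
    derivative (Fp s t) = (X - C 1) * (X - C s) * (X - C t) * (X + C 1) := by
  apply Polynomial.funext
  intro x
  simp [Fp, derivative_add, derivative_sub, derivative_C_mul, derivative_X_pow]
  ring

lemma Fp_eval (s t x : ℝ) :
    (Fp s t).eval x = x^5/5 - (s+t)/4*x^4 + (s*t-1)/3*x^3 + (s+t)/2*x^2 - s*t*x := by
  simp [Fp]; ring

lemma Fp_natdeg (s t c : ℝ) : (Fp s t + C c).natDegree = 5 := by
  unfold Fp; compute_degree!

lemma Fp_coeff5 (s t c : ℝ) : (Fp s t + C c).coeff 5 = 1/5 := by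
  unfold Fp
  simp [coeff_add, coeff_C, coeff_X_pow, coeff_C_mul, coeff_X]

lemma peval (s t x : ℝ) :
    ((X - C 1) * (X - C s) * (X - C t) * (X + C 1) : ℝ[X]).eval x
      = (x-1)*(x-s)*(x-t)*(x+1) := by simp

lemma psign_left {s t x : ℝ} (hs : -1 ≤ s) (ht : -1 ≤ t) (hx : x < -1) :
    0 < (x-1)*(x-s)*(x-t)*(x+1) := by
  nlinarith [mul_pos (mul_pos (mul_pos (by linarith : (0:ℝ) < 1 - x) (by linarith : (0:ℝ) < s - x)) (by linarith : (0:ℝ) < t - x)) (by linarith : (0:ℝ) < -1 - x)]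

lemma psign_right {s t x : ℝ} (hs : s ≤ 1) (ht : t ≤ 1) (hx : 1 < x) :
    0 < (x-1)*(x-s)*(x-t)*(x+1) := by
  nlinarith [mul_pos (mul_pos (mul_pos (by linarith : (0:ℝ) < x - 1) (by linarith : (0:ℝ) < x - s)) (by linarith : (0:ℝ) < x - t)) (by linarith : (0:ℝ) < x + 1)]

lemma psign_mid {s t x : ℝ} (hs1 : -1 ≤ s) (ht1 : t ≤ 1) (hsx : s ≤ x) (hxt : x ≤ t) :
    0 ≤ (x-1)*(x-s)*(x-t)*(x+1) := by
  nlinarith [mul_nonneg (mul_nonneg (mul_nonneg (by linarith : (0:ℝ) ≤ 1 - x) (by linarith : (0:ℝ) ≤ x - s)) (by linarith : (0:ℝ) ≤ t - x)) (by linarith : (0:ℝ) ≤ x + 1)]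

-- on [-1, min s t] : p ≤ 0
lemma psign_ls {s t x : ℝ} (hxt : x ≤ t) (hx1 : -1 ≤ x) (hxs : x ≤ s) (hs : s ≤ 1) :
    (x-1)*(x-s)*(x-t)*(x+1) ≤ 0 := by
  nlinarith [mul_nonneg (mul_nonneg (mul_nonneg (by linarith : (0:ℝ) ≤ 1 - x) (by linarith : (0:ℝ) ≤ s - x)) (by linarith : (0:ℝ) ≤ t - x)) (by linarith : (0:ℝ) ≤ x + 1)]

-- on [max s t, 1] : p ≤ 0
lemma psign_rs {s t x : ℝ} (hsx : s ≤ x) (htx : t ≤ x) (hx1 : x ≤ 1) (hs : -1 ≤ s) :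
    (x-1)*(x-s)*(x-t)*(x+1) ≤ 0 := by
  nlinarith [mul_nonneg (mul_nonneg (mul_nonneg (by linarith : (0:ℝ) ≤ 1 - x) (by linarith : (0:ℝ) ≤ x - s)) (by linarith : (0:ℝ) ≤ x - t)) (by linarith : (0:ℝ) ≤ x + 1)]

lemma eval_mono (q : ℝ[X]) {a b : ℝ} (hab : a ≤ b)
    (h : ∀ x, a < x → x < b → 0 ≤ (derivative q).eval x) :
    q.eval a ≤ q.eval b := by
  have hm : MonotoneOn (fun x => q.eval x) (Set.Icc a b) := by
    apply monotoneOn_of_deriv_nonneg (convex_Icc a b) q.continuous.continuousOn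
    · intro x hx
      exact (q.differentiable.differentiableAt).differentiableWithinAt
    · intro x hx
      rw [interior_Icc] at hx
      rw [Polynomial.deriv]
      exact h x hx.1 hx.2
  exact hm (Set.left_mem_Icc.2 hab) (Set.right_mem_Icc.2 hab) hab

lemma eval_strictmono (q : ℝ[X]) {a b : ℝ} (hab : a < b)
    (h : ∀ x, a < x → x < b → 0 < (derivative q).eval x) :
    q.eval a < q.eval b := by
  have hm : StrictMonoOn (fun x => q.eval x) (Set.Icc a b) := by
    apply strictMonoOn_of_deriv_pos (convex_Icc a b) q.continuous.continuousOn
    intro x hx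
    rw [interior_Icc] at hx
    rw [Polynomial.deriv]
    exact h x hx.1 hx.2
  exact hm (Set.left_mem_Icc.2 hab.le) (Set.right_mem_Icc.2 hab.le) hab

lemma root_between (q : ℝ[X]) {a b : ℝ} (hab : a ≤ b) (ha : q.eval a ≤ 0) (hb : 0 ≤ q.eval b) :
    ∃ x, x ∈ Set.Icc a b ∧ q.eval x = 0 := by
  have := intermediate_value_Icc hab q.continuous.continuousOn
  obtain ⟨x, hx, hx0⟩ := this ⟨ha, hb⟩
  exact ⟨x, hx, hx0⟩

lemma root_between' (q : ℝ[X]) {a b : ℝ} (hab : a ≤ b) (ha : 0 ≤ q.eval a) (hb : q.eval b ≤ 0) :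
    ∃ x, x ∈ Set.Icc a b ∧ q.eval x = 0 := by
  have := intermediate_value_Icc' hab q.continuous.continuousOn
  obtain ⟨x, hx, hx0⟩ := this ⟨hb, ha⟩
  exact ⟨x, hx, hx0⟩

lemma dp_eval (s t x : ℝ) :
    (derivative ((X - C 1) * (X - C s) * (X - C t) * (X + C 1) : ℝ[X])).eval x
      = (x-s)*(x-t)*(x+1) + (x-1)*(x-t)*(x+1) + (x-1)*(x-s)*(x+1) + (x-1)*(x-s)*(x-t) := by
  simp [derivative_mul]
  ring

lemma d2p_eval (s t x : ℝ) :
    (derivative (derivative ((X - C 1) * (X - C s) * (X - C t) * (X + C 1) : ℝ[X]))).eval x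
      = 2*((x-t)*(x+1) + (x-s)*(x+1) + (x-s)*(x-t)
          + (x-1)*(x+1) + (x-1)*(x-t) + (x-1)*(x-s)) := by
  simp [derivative_mul]
  ring

lemma eval_anti (q : ℝ[X]) {a b : ℝ} (hab : a ≤ b)
    (h : ∀ x, a < x → x < b → (derivative q).eval x ≤ 0) :
    q.eval b ≤ q.eval a := by
  have hm : AntitoneOn (fun x => q.eval x) (Set.Icc a b) := by
    apply antitoneOn_of_deriv_nonpos (convex_Icc a b) q.continuous.continuousOn
    · intro x hx
      exact (q.differentiable.differentiableAt).differentiableWithinAt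
    · intro x hx
      rw [interior_Icc] at hx
      rw [Polynomial.deriv]
      exact h x hx.1 hx.2
  exact hm (Set.left_mem_Icc.2 hab) (Set.right_mem_Icc.2 hab) hab

lemma bnd2 {a b : ℝ} (ha1 : -1 ≤ a) (ha2 : a ≤ 1) (hb1 : -1 ≤ b) (hb2 : b ≤ 1) :
    -1 ≤ a*b ∧ a*b ≤ 1 := by
  constructor <;> nlinarith

lemma F10 (s t u : ℝ) (hs1 : -1 ≤ s) (hs2 : s ≤ 1) (ht1 : -1 ≤ t) (ht2 : t ≤ 1)
    (hu1 : -1 ≤ u) (hu2 : u ≤ 1) : (Fp s t).eval u < (Fp s t).eval 10 := by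
  rw [Fp_eval, Fp_eval]
  obtain ⟨hst1, hst2⟩ := bnd2 hs1 hs2 ht1 ht2
  obtain ⟨hu21, hu22⟩ := bnd2 hu1 hu2 hu1 hu2
  obtain ⟨hu31, hu32⟩ := bnd2 hu21 hu22 hu1 hu2
  obtain ⟨hu41, hu42⟩ := bnd2 hu31 hu32 hu1 hu2
  obtain ⟨hu51, hu52⟩ := bnd2 hu41 hu42 hu1 hu2
  obtain ⟨hsu41, hsu42⟩ := bnd2 hs1 hs2 hu41 hu42
  obtain ⟨htu41, htu42⟩ := bnd2 ht1 ht2 hu41 hu42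
  obtain ⟨hstu31, hstu32⟩ := bnd2 hst1 hst2 hu31 hu32
  obtain ⟨hsu21, hsu22⟩ := bnd2 hs1 hs2 hu21 hu22
  obtain ⟨htu21, htu22⟩ := bnd2 ht1 ht2 hu21 hu22
  obtain ⟨hstu11, hstu12⟩ := bnd2 hst1 hst2 hu1 hu2
  have e2 : u^2 = u*u := by ring
  have e3 : u^3 = u*u*u := by ring
  have e4 : u^4 = u*u*u*u := by ring
  have e5 : u^5 = u*u*u*u*u := by ring
  nlinarith [hst1, hst2, hu51, hu52, hsu41, hsu42, htu41, htu42, hstu31, hstu32,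
    hsu21, hsu22, htu21, htu22, hstu11, hstu12]

lemma multiset_prod_nonneg (m : Multiset ℝ) (h : ∀ x ∈ m, 0 ≤ x) : 0 ≤ m.prod := by
  induction m using Multiset.induction with
  | empty => simp
  | cons a s ih =>
    rw [Multiset.prod_cons]
    exact mul_nonneg (h a (by simp)) (ih fun x hx => h x (by simp [hx]))

lemma prod_neg_form (m : Multiset ℝ) (g : ℝ → ℝ) :
    (m.map (fun r => -(g r))).prod = (-1)^(Multiset.card m) * (m.map g).prod := by
  induction m using Multiset.induction with
  | empty => simp
  | cons a s ih =>
    rw [Multiset.map_cons, Multiset.prod_cons, Multiset.map_cons, Multiset.prod_cons, ih,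
      Multiset.card_cons, pow_succ]
    ring

lemma prod_sign_below (m : Multiset ℝ) (hm : ∀ r ∈ m, (-1:ℝ) < r) :
    0 < (-1:ℝ)^(Multiset.card m) * ((m.map (fun r => X - C r)).prod).eval (-1) ∧
    (m ≠ 0 → 0 < (-1:ℝ)^(Multiset.card m + 1) *
      (derivative ((m.map (fun r => X - C r)).prod)).eval (-1)) := by
  induction m using Multiset.induction with
  | empty => simp
  | cons a s ih =>
    have ha : (0:ℝ) < 1 + a := by have := hm a (by simp); linarith
    obtain ⟨A, B⟩ := ih (fun r hr => hm r (by simp [hr]))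
    rw [Multiset.map_cons, Multiset.prod_cons, Multiset.card_cons]
    constructor
    · rw [pow_succ, eval_mul]
      simp only [eval_sub, eval_X, eval_C]
      nlinarith [A]
    · intro _
      rw [derivative_mul, eval_add, eval_mul, eval_mul, pow_succ, pow_succ]
      simp only [derivative_sub, derivative_X, derivative_C, sub_zero, eval_one, eval_sub,
        eval_X, eval_C, one_mul]
      rcases eq_or_ne s 0 with rfl | hs0
      · simp
      · have hB := B hs0
        rw [pow_succ] at hB
        nlinarith [A, hB, mul_pos ha hB]

lemma prod_sign_above (m : Multiset ℝ) (hm : ∀ r ∈ m, r < (1:ℝ)) :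
    0 < ((m.map (fun r => X - C r)).prod).eval 1 ∧
    (m ≠ 0 → 0 < (derivative ((m.map (fun r => X - C r)).prod)).eval 1) := by
  induction m using Multiset.induction with
  | empty => simp
  | cons a s ih =>
    have ha : (0:ℝ) < 1 - a := by have := hm a (by simp); linarith
    obtain ⟨A, B⟩ := ih (fun r hr => hm r (by simp [hr]))
    rw [Multiset.map_cons, Multiset.prod_cons]
    constructor
    · rw [eval_mul]
      simp only [eval_sub, eval_X, eval_C]
      nlinarith [A]
    · intro _
      rw [derivative_mul, eval_add, eval_mul, eval_mul]
      simp only [derivative_sub, derivative_X, derivative_C, sub_zero, eval_one, eval_sub,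
        eval_X, eval_C, one_mul]
      rcases eq_or_ne s 0 with rfl | hs0
      · simp
      · nlinarith [A, B hs0, mul_pos ha (B hs0)]

lemma card_roots_ge (P : ℝ[X]) (hP : P ≠ 0) (a b c : ℝ) (k m n : ℕ)
    (hab : a ≠ b) (hac : a ≠ c) (hbc : b ≠ c)
    (ha : k ≤ P.rootMultiplicity a) (hb : m ≤ P.rootMultiplicity b)
    (hc : n ≤ P.rootMultiplicity c) :
    k + m + n ≤ Multiset.card P.roots := by
  classical
  have hle : Multiset.replicate k a + Multiset.replicate m b + Multiset.replicate n c
      ≤ P.roots := by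
    rw [Multiset.le_iff_count]
    intro x
    rw [Multiset.count_add, Multiset.count_add, Multiset.count_replicate,
      Multiset.count_replicate, Multiset.count_replicate, count_roots]
    by_cases hxa : a = x
    · subst hxa
      rw [if_pos rfl, if_neg (fun h => hab h.symm), if_neg (fun h => hac h.symm)]
      simpa using ha
    · rw [if_neg hxa]
      by_cases hxb : b = x
      · subst hxb
        rw [if_pos rfl, if_neg (fun h => hbc h.symm)]
        simpa using hb
      · rw [if_neg hxb]
        by_cases hxc : c = x
        · subst hxc; rw [if_pos rfl]; simpa using hc
        · rw [if_neg hxc]; simp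
  have := Multiset.card_le_card hle
  simpa using this

lemma mult_of_derivs (P : ℝ[X]) (hP : P ≠ 0) (a : ℝ) (k : ℕ) (hk : 0 < k)
    (h : ∀ j < k, (derivative^[j] P).eval a = 0) :
    k ≤ P.rootMultiplicity a := by
  have := Polynomial.lt_rootMultiplicity_of_isRoot_iterate_derivative (n := k - 1) hP
    (fun m hm => h m (by omega))
  omega

lemma hyp_of_card (P : ℝ[X]) (h5 : P.natDegree = 5) (h4 : 4 ≤ Multiset.card P.roots) :
    Hyperbolic P := by
  classical
  have hP : P ≠ 0 := fun h => by simp [h] at h5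
  set f := algebraMap ℝ ℂ with hf
  have hmap : P.map f ≠ 0 := by
    simpa using (Polynomial.map_ne_zero hP : P.map f ≠ 0)
  have hcard : Multiset.card (P.map f).roots = 5 := by
    rw [← (IsAlgClosed.splits (P.map f)).natDegree_eq_card_roots, natDegree_map, h5]
  have hmr : P.roots.map f ≤ (P.map f).roots := Polynomial.map_roots_le hmap
  intro z hz
  by_contra him
  have hzr : (P.map f).IsRoot z := (Polynomial.mem_roots'.1 hz).2
  have hconj : (P.map f).IsRoot ((starRingEnd ℂ) z) := by
    have h1 : aeval z P = 0 := by
      rwa [Polynomial.aeval_def, ← Polynomial.eval_map]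
    have h2 : aeval ((starRingEnd ℂ) z) P = (starRingEnd ℂ) (aeval z P) :=
      Polynomial.aeval_conj P z
    rw [h1, map_zero] at h2
    rwa [Polynomial.aeval_def, ← Polynomial.eval_map] at h2
  have hzconj : z ≠ (starRingEnd ℂ) z := by
    intro h
    exact him ((Complex.conj_eq_iff_im).1 h.symm)
  set K : Multiset ℂ := (P.map f).roots - P.roots.map f with hK
  have hcount : ∀ w : ℂ, w.im ≠ 0 → (P.map f).IsRoot w → 1 ≤ K.count w := by
    intro w hw hwr
    have hwm : w ∈ (P.map f).roots := Polynomial.mem_roots'.2 ⟨hmap, hwr⟩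
    have h0 : (P.roots.map f).count w = 0 := by
      rw [Multiset.count_eq_zero]
      intro hmem
      obtain ⟨r, _, rfl⟩ := Multiset.mem_map.1 hmem
      exact hw (by simp [hf])
    rw [hK, Multiset.count_sub, h0, Nat.sub_zero]
    exact Multiset.count_pos.2 hwm
  have hKcard : Multiset.card K ≤ 1 := by
    have hc := Multiset.card_le_card hmr
    rw [Multiset.card_map] at hc
    have hsub : Multiset.card K = Multiset.card (P.map f).roots
        - Multiset.card (P.roots.map f) := Multiset.card_sub hmr
    rw [Multiset.card_map] at hsub
    omega
  have hzK : z ∈ K := Multiset.count_pos.1 (by have := hcount z him hzr; omega)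
  have hcK : (starRingEnd ℂ) z ∈ K.erase z := by
    rw [Multiset.mem_erase_of_ne (fun h => hzconj h.symm)]
    exact Multiset.count_pos.1 (by have := hcount _ (by simpa using him) hconj; omega)
  have h1 := Multiset.card_erase_of_mem hzK
  have h2 : 0 < Multiset.card (K.erase z) := Multiset.card_pos.2 (by
    intro h0; rw [h0] at hcK; simp at hcK)
  rw [h1, Nat.pred_eq_sub_one] at h2
  omega

lemma rep_of_hyperbolic (P : ℝ[X]) (h5 : P.natDegree = 5) (hl : P.leadingCoeff = 1/5)
    (hyp : Hyperbolic P) :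
    ∃ μ : Multiset ℝ, Multiset.card μ = 5 ∧
      P = C (1/5 : ℝ) * (μ.map (fun r => X - C r)).prod := by
  have hP : P ≠ 0 := fun h => by simp [h] at h5
  set f := algebraMap ℝ ℂ with hf
  set m := (P.map f).roots with hm
  have hcard : Multiset.card m = 5 := by
    rw [hm, ← (IsAlgClosed.splits (P.map f)).natDegree_eq_card_roots, natDegree_map, h5]
  refine ⟨m.map Complex.re, by simp [hcard], ?_⟩
  apply Polynomial.map_injective f f.injective
  have hsp : Splits (P.map f) := IsAlgClosed.splits (P.map f)
  have heq := hsp.eq_prod_roots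
  have hlc : (P.map f).leadingCoeff = (1/5 : ℂ) := by
    rw [Polynomial.leadingCoeff_map f, hl]
    simp [hf]
  have hmm : (m.map Complex.re).map (fun r : ℝ => (r : ℂ)) = m := by
    rw [Multiset.map_map]
    have : ∀ z ∈ m, ((z.re : ℝ) : ℂ) = z := by
      intro z hz
      exact Complex.ext (by simp) (by simp [hyp z hz])
    calc m.map (fun z => ((z.re : ℝ) : ℂ)) = m.map id := Multiset.map_congr rfl this
      _ = m := Multiset.map_id m
  rw [Polynomial.map_mul, Polynomial.map_multiset_prod, map_C, heq, hlc]
  congr 1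
  · simp [hf]
  · rw [Multiset.map_map, Multiset.map_map]
    symm
    refine congrArg Multiset.prod ?_
    apply Multiset.map_congr rfl
    intro z hz
    have hz0 : ((z.re : ℝ) : ℂ) = z := Complex.ext (by simp) (by simp [hyp z hz])
    simp [Function.comp, hf, Polynomial.map_sub, map_C, hz0]

lemma reverse_dir (s t : ℝ) (hs1 : -1 ≤ s) (hs2 : s ≤ 1) (ht1 : -1 ≤ t) (ht2 : t ≤ 1)
    (P : ℝ[X])
    (hd : derivative P = (X - C 1) * (X - C s) * (X - C t) * (X + C 1))
    (hyp : Hyperbolic P) : s * t ≥ -(1/5) := by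
  classical
  -- P = Fp s t + C c
  obtain ⟨c, hc⟩ : ∃ c, P = Fp s t + C c := by
    have h0 : derivative (P - Fp s t) = 0 := by
      rw [derivative_sub, hd, deriv_Fp, sub_self]
    refine ⟨(P - Fp s t).coeff 0, ?_⟩
    have := Polynomial.eq_C_of_derivative_eq_zero h0
    rw [← this]; ring
  have hdeg : P.natDegree = 5 := by rw [hc]; exact Fp_natdeg s t c
  have hlc : P.leadingCoeff = 1/5 := by
    rw [← Polynomial.coeff_natDegree, hdeg, hc, Fp_coeff5]
  obtain ⟨μ, hcard, hrep⟩ := rep_of_hyperbolic P hdeg hlc hyp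
  have evalP : ∀ x : ℝ, P.eval x = (1/5) * ((μ.map (fun r => x - r)).prod) := by
    intro x
    rw [hrep, eval_mul, eval_C, Polynomial.eval_multiset_prod, Multiset.map_map]
    congr 2
    apply Multiset.map_congr rfl
    intro r _
    simp
  have hroots : ∀ r ∈ μ, P.eval r = 0 := by
    intro r hr
    rw [evalP r]
    have : (0:ℝ) ∈ μ.map (fun q => r - q) := by
      rw [Multiset.mem_map]; exact ⟨r, hr, sub_self r⟩
    rw [Multiset.prod_eq_zero this, mul_zero]
  have pevalP : ∀ x : ℝ, (derivative P).eval x = (x-1)*(x-s)*(x-t)*(x+1) := by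
    intro x; rw [hd, peval]
  -- at most one element < -1
  have atmost_left : Multiset.card (μ.filter (fun r => r < -1)) ≤ 1 := by
    by_contra hcon
    push_neg at hcon
    set ν := μ.filter (fun r => r < -1) with hν
    obtain ⟨a, ha⟩ : ∃ a, a ∈ ν := Multiset.exists_mem_of_ne_zero
      (by intro h; rw [h] at hcon; simp at hcon)
    have haν := ha
    rw [hν, Multiset.mem_filter] at haν
    obtain ⟨b, hb⟩ : ∃ b, b ∈ ν.erase a := by
      apply Multiset.exists_mem_of_ne_zero
      intro h
      have := Multiset.card_erase_of_mem ha
      rw [h] at this; simp at this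
      omega
    have hbν : b ∈ ν := Multiset.mem_of_mem_erase hb
    rw [hν, Multiset.mem_filter] at hbν
    rcases eq_or_ne a b with rfl | hab
    · -- double root a < -1
      have hcnt : 2 ≤ μ.count a := by
        have h1 : 1 ≤ (ν.erase a).count a := Multiset.one_le_count_iff_mem.2 hb
        have h2 : (ν.erase a).count a = ν.count a - 1 := Multiset.count_erase_self a ν
        have h3 : ν.count a ≤ μ.count a :=
          Multiset.count_le_of_le a (Multiset.filter_le _ μ)
        omega
      obtain ⟨μ2, hμ2⟩ : ∃ μ2, μ = Multiset.replicate 2 a + μ2 :=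
        Multiset.le_iff_exists_add.1 (Multiset.le_count_iff_replicate_le.1 hcnt)
      have hP2 : P = C (1/5:ℝ) * ((X - C a)^2 * (μ2.map (fun r => X - C r)).prod) := by
        rw [hrep, hμ2, Multiset.map_add, Multiset.prod_add, Multiset.map_replicate,
          Multiset.prod_replicate]
      have hder0 : (derivative P).eval a = 0 := by
        rw [hP2]
        simp [derivative_mul, derivative_pow]
      rw [pevalP a] at hder0
      have := psign_left hs1 ht1 haν.2
      linarith
    · -- two distinct roots < -1
      rcases hab.lt_or_gt with h | h
      · have := eval_strictmono P h (fun x hx1 hx2 => by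
          rw [pevalP]; exact psign_left hs1 ht1 (by linarith [hbν.2]))
        rw [hroots a haν.1, hroots b hbν.1] at this
        exact lt_irrefl 0 this
      · have := eval_strictmono P h (fun x hx1 hx2 => by
          rw [pevalP]; exact psign_left hs1 ht1 (by linarith [haν.2]))
        rw [hroots a haν.1, hroots b hbν.1] at this
        exact lt_irrefl 0 this
  -- at most one element > 1
  have atmost_right : Multiset.card (μ.filter (fun r => 1 < r)) ≤ 1 := by
    by_contra hcon
    push_neg at hcon
    set ν := μ.filter (fun r => 1 < r) with hν
    obtain ⟨a, ha⟩ : ∃ a, a ∈ ν := Multiset.exists_mem_of_ne_zero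
      (by intro h; rw [h] at hcon; simp at hcon)
    have haν := ha
    rw [hν, Multiset.mem_filter] at haν
    obtain ⟨b, hb⟩ : ∃ b, b ∈ ν.erase a := by
      apply Multiset.exists_mem_of_ne_zero
      intro h
      have := Multiset.card_erase_of_mem ha
      rw [h] at this; simp at this
      omega
    have hbν : b ∈ ν := Multiset.mem_of_mem_erase hb
    rw [hν, Multiset.mem_filter] at hbν
    rcases eq_or_ne a b with rfl | hab
    · have hcnt : 2 ≤ μ.count a := by
        have h1 : 1 ≤ (ν.erase a).count a := Multiset.one_le_count_iff_mem.2 hb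
        have h2 : (ν.erase a).count a = ν.count a - 1 := Multiset.count_erase_self a ν
        have h3 : ν.count a ≤ μ.count a :=
          Multiset.count_le_of_le a (Multiset.filter_le _ μ)
        omega
      obtain ⟨μ2, hμ2⟩ : ∃ μ2, μ = Multiset.replicate 2 a + μ2 :=
        Multiset.le_iff_exists_add.1 (Multiset.le_count_iff_replicate_le.1 hcnt)
      have hP2 : P = C (1/5:ℝ) * ((X - C a)^2 * (μ2.map (fun r => X - C r)).prod) := by
        rw [hrep, hμ2, Multiset.map_add, Multiset.prod_add, Multiset.map_replicate,
          Multiset.prod_replicate]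
      have hder0 : (derivative P).eval a = 0 := by
        rw [hP2]
        simp [derivative_mul, derivative_pow]
      rw [pevalP a] at hder0
      have := psign_right hs2 ht2 haν.2
      linarith
    · rcases hab.lt_or_gt with h | h
      · have := eval_strictmono P h (fun x hx1 hx2 => by
          rw [pevalP]; exact psign_right hs2 ht2 (by linarith [haν.2]))
        rw [hroots a haν.1, hroots b hbν.1] at this
        exact lt_irrefl 0 this
      · have := eval_strictmono P h (fun x hx1 hx2 => by
          rw [pevalP]; exact psign_right hs2 ht2 (by linarith [hbν.2]))
        rw [hroots a haν.1, hroots b hbν.1] at this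
        exact lt_irrefl 0 this
  have hμ0 : μ ≠ 0 := by intro h0; rw [h0] at hcard; simp at hcard
  -- at least one element ≤ -1
  have atleast_left : ∃ r ∈ μ, r ≤ -1 := by
    by_contra hcon
    push_neg at hcon
    have hgt : ∀ r ∈ μ, (-1:ℝ) < r := fun r hr => hcon r hr
    have hD := (prod_sign_below μ hgt).2 hμ0
    rw [hcard] at hD
    norm_num at hD
    have hder : (derivative P).eval (-1)
        = (1/5) * (derivative ((μ.map (fun r => X - C r)).prod)).eval (-1) := by
      rw [hrep, derivative_C_mul, eval_mul, eval_C]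
    have hzero : (derivative P).eval (-1) = 0 := by rw [pevalP]; ring
    rw [hzero] at hder
    linarith
  have atleast_right : ∃ r ∈ μ, 1 ≤ r := by
    by_contra hcon
    push_neg at hcon
    have hD := (prod_sign_above μ hcon).2 hμ0
    have hder : (derivative P).eval 1
        = (1/5) * (derivative ((μ.map (fun r => X - C r)).prod)).eval 1 := by
      rw [hrep, derivative_C_mul, eval_mul, eval_C]
    have hzero : (derivative P).eval 1 = 0 := by rw [pevalP]; ring
    rw [hzero] at hder
    linarith
  -- decomposition on the left
  obtain ⟨x, hxμ, hxle, hall⟩ :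
      ∃ x, x ∈ μ ∧ x ≤ -1 ∧ ∀ y ∈ μ.erase x, (-1:ℝ) ≤ y := by
    by_cases hex : ∃ x ∈ μ, x < -1
    · obtain ⟨x, hxμ, hx⟩ := hex
      refine ⟨x, hxμ, hx.le, ?_⟩
      intro y hy
      by_contra hy'
      push_neg at hy'
      have hcons : μ = x ::ₘ μ.erase x := (Multiset.cons_erase hxμ).symm
      have hfil : μ.filter (fun r => r < -1) = x ::ₘ (μ.erase x).filter (fun r => r < -1) := by
        conv_lhs => rw [hcons]
        rw [Multiset.filter_cons_of_pos (p := fun r : ℝ => r < -1) _ hx]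
      have hy2 : y ∈ (μ.erase x).filter (fun r => r < -1) :=
        Multiset.mem_filter.2 ⟨hy, hy'⟩
      have : 2 ≤ Multiset.card (μ.filter (fun r => r < -1)) := by
        rw [hfil, Multiset.card_cons]
        have := Multiset.one_le_count_iff_mem.2 hy2
        have hpos : 0 < Multiset.card ((μ.erase x).filter (fun r => r < -1)) :=
          Multiset.card_pos.2 (by intro h0; rw [h0] at hy2; simp at hy2)
        omega
      omega
    · push_neg at hex
      obtain ⟨r, hrμ, hr⟩ := atleast_left
      exact ⟨r, hrμ, hr, fun y hy => hex y (Multiset.mem_of_mem_erase hy)⟩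
  -- decomposition on the right
  obtain ⟨w, hwμ, hwge, hallw⟩ :
      ∃ w, w ∈ μ ∧ 1 ≤ w ∧ ∀ y ∈ μ.erase w, y ≤ (1:ℝ) := by
    by_cases hex : ∃ w ∈ μ, 1 < w
    · obtain ⟨w, hwμ, hw⟩ := hex
      refine ⟨w, hwμ, hw.le, ?_⟩
      intro y hy
      by_contra hy'
      push_neg at hy'
      have hcons : μ = w ::ₘ μ.erase w := (Multiset.cons_erase hwμ).symm
      have hfil : μ.filter (fun r => 1 < r) = w ::ₘ (μ.erase w).filter (fun r => 1 < r) := by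
        conv_lhs => rw [hcons]
        rw [Multiset.filter_cons_of_pos (p := fun r : ℝ => 1 < r) _ hw]
      have hy2 : y ∈ (μ.erase w).filter (fun r => 1 < r) :=
        Multiset.mem_filter.2 ⟨hy, hy'⟩
      have : 2 ≤ Multiset.card (μ.filter (fun r => 1 < r)) := by
        rw [hfil, Multiset.card_cons]
        have hpos : 0 < Multiset.card ((μ.erase w).filter (fun r => 1 < r)) :=
          Multiset.card_pos.2 (by intro h0; rw [h0] at hy2; simp at hy2)
        omega
      omega
    · push_neg at hex
      obtain ⟨r, hrμ, hr⟩ := atleast_right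
      exact ⟨r, hrμ, hr, fun y hy => hex y (Multiset.mem_of_mem_erase hy)⟩
  -- P.eval (-1) ≥ 0
  have hPm1 : 0 ≤ P.eval (-1) := by
    have hcons : μ = x ::ₘ μ.erase x := (Multiset.cons_erase hxμ).symm
    have he := evalP (-1)
    rw [hcons, Multiset.map_cons, Multiset.prod_cons] at he
    have hswitch : (μ.erase x).map (fun r => (-1:ℝ) - r)
        = (μ.erase x).map (fun r => -((fun q => 1 + q) r)) :=
      Multiset.map_congr rfl (fun y _ => by ring)
    have hcard4 : Multiset.card (μ.erase x) = 4 := by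
      rw [Multiset.card_erase_of_mem hxμ, hcard]
      rfl
    have hprod : 0 ≤ ((μ.erase x).map (fun r => (-1:ℝ) - r)).prod := by
      rw [hswitch, prod_neg_form, hcard4]
      norm_num
      exact multiset_prod_nonneg _ (by
        intro y hy
        obtain ⟨z, hz, rfl⟩ := Multiset.mem_map.1 hy
        have := hall z hz
        linarith)
    rw [he]
    have hx0 : (0:ℝ) ≤ -1 - x := by linarith
    positivity
  -- P.eval 1 ≤ 0
  have hP1 : P.eval 1 ≤ 0 := by
    have hcons : μ = w ::ₘ μ.erase w := (Multiset.cons_erase hwμ).symm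
    have he := evalP 1
    rw [hcons, Multiset.map_cons, Multiset.prod_cons] at he
    have hprod : 0 ≤ ((μ.erase w).map (fun r => (1:ℝ) - r)).prod := by
      exact multiset_prod_nonneg _ (by
        intro y hy
        obtain ⟨z, hz, rfl⟩ := Multiset.mem_map.1 hy
        have := hallw z hz
        linarith)
    rw [he]
    have hw0 : 1 - w ≤ 0 := by linarith
    nlinarith [hprod, hw0]
  -- conclude
  have hdiff : P.eval 1 - P.eval (-1) = -(4/15) - (4/3)*(s*t) := by
    rw [hc]
    simp only [eval_add, eval_C, Fp_eval]
    ring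
  linarith

lemma card_roots_ge2 (P : ℝ[X]) (hP : P ≠ 0) (a b : ℝ) (k m : ℕ) (hab : a ≠ b)
    (ha : k ≤ P.rootMultiplicity a) (hb : m ≤ P.rootMultiplicity b) :
    k + m ≤ Multiset.card P.roots := by
  have hc : a ≠ |a| + |b| + 1 := by
    have := abs_nonneg a; have := abs_nonneg b; have := le_abs_self a; linarith
  have hbc : b ≠ |a| + |b| + 1 := by
    have := abs_nonneg a; have := abs_nonneg b; have := le_abs_self b; linarith
  have := card_roots_ge P hP a b (|a| + |b| + 1) k m 0 hab hc hbc ha hb (Nat.zero_le _)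
  omega

lemma forward_dir (s t : ℝ) (hs1 : -1 ≤ s) (hs2 : s ≤ 1) (ht1 : -1 ≤ t) (ht2 : t ≤ 1)
    (hst : s ≤ t) (h : s * t ≥ -(1/5)) :
    ∃ P : ℝ[X], derivative P
      = (X - C 1) * (X - C s) * (X - C t) * (X + C 1) ∧ Hyperbolic P := by
  have hFst : (Fp s t).eval s ≤ (Fp s t).eval t :=
    eval_mono _ hst (fun x hx1 hx2 => by
      rw [deriv_Fp, peval]; exact psign_mid hs1 ht2 hx1.le hx2.le)
  have hF1t : (Fp s t).eval 1 ≤ (Fp s t).eval t :=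
    eval_anti _ ht2 (fun x hx1 hx2 => by
      rw [deriv_Fp, peval]
      exact psign_rs (by linarith) hx1.le hx2.le hs1)
  have hFs_1 : (Fp s t).eval s ≤ (Fp s t).eval (-1) :=
    eval_anti _ hs1 (fun x hx1 hx2 => by
      rw [deriv_Fp, peval]
      exact psign_ls (by linarith) hx1.le hx2.le hs2)
  have hF1m1 : (Fp s t).eval 1 - (Fp s t).eval (-1) = -(4/15) - (4/3)*(s*t) := by
    rw [Fp_eval, Fp_eval]; ring
  rcases le_total ((Fp s t).eval t) ((Fp s t).eval (-1)) with hbr | hbr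
  · -- Case A : P vanishes at t
    set P : ℝ[X] := Fp s t + C (-(Fp s t).eval t) with hP
    have hd : derivative P = (X - C 1) * (X - C s) * (X - C t) * (X + C 1) := by
      rw [hP, derivative_add, derivative_C, add_zero, deriv_Fp]
    have hPeval : ∀ x : ℝ, P.eval x = (Fp s t).eval x - (Fp s t).eval t := by
      intro x; rw [hP]; simp; ring
    have hdeg : P.natDegree = 5 := Fp_natdeg s t _
    have hP0 : P ≠ 0 := by
      intro h0
      have := Fp_coeff5 s t (-(Fp s t).eval t)
      rw [← hP, h0] at this
      simp at this
    have hPt : P.eval t = 0 := by rw [hPeval]; ring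
    have hpt : (derivative P).eval t = 0 := by rw [hd, peval]; ring
    have hPm1 : 0 ≤ P.eval (-1) := by rw [hPeval]; linarith
    have hPs : P.eval s ≤ 0 := by rw [hPeval]; linarith
    have hP1 : P.eval 1 ≤ 0 := by rw [hPeval]; linarith
    have hP10 : 0 ≤ P.eval 10 := by
      rw [hPeval]
      have := F10 s t t hs1 hs2 ht1 ht2 ht1 ht2
      linarith
    refine ⟨P, hd, ?_⟩
    apply hyp_of_card P hdeg
    rcases hst.eq_or_lt with rfl | hslt
    · -- s = t
      have hds : (derivative (derivative P)).eval s = 0 := by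
        have h2 : derivative (derivative P) =
            derivative ((X - C 1) * (X - C s) * (X - C s) * (X + C 1)) := by rw [hd]
        rw [h2, dp_eval]; ring
      have hm3 : 3 ≤ P.rootMultiplicity s := by
        apply mult_of_derivs P hP0 s 3 (by norm_num)
        intro j hj
        interval_cases j
        · simpa using hPt
        · simpa using hpt
        · simpa [Function.iterate_succ_apply', Function.iterate_one] using hds
      rcases hs2.eq_or_lt with rfl | hs2'
      · -- s = t = 1
        have hd2s : (derivative^[3] P).eval 1 = 0 := by
          have h3 : derivative^[3] P
              = derivative (derivative (derivative P)) := by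
            simp [Function.iterate_succ_apply', Function.iterate_one]
          rw [h3, hd, d2p_eval]; ring
        have hm4 : 4 ≤ P.rootMultiplicity 1 := by
          apply mult_of_derivs P hP0 1 4 (by norm_num)
          intro j hj
          interval_cases j
          · simpa using hPt
          · simpa using hpt
          · simpa [Function.iterate_succ_apply', Function.iterate_one] using hds
          · exact hd2s
        -- a root in [-2, -1]
        have hPm2 : P.eval (-2) ≤ 0 := by
          rw [hPeval, Fp_eval, Fp_eval]; norm_num
        obtain ⟨ra, hra, hra0⟩ := root_between P (by norm_num : (-2:ℝ) ≤ -1) hPm2 hPm1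
        have hmra : 1 ≤ P.rootMultiplicity ra :=
          (Polynomial.rootMultiplicity_pos hP0).2 hra0
        have := card_roots_ge2 P hP0 1 ra 4 1 (by
          intro hh; rw [← hh] at hra; simp at hra; linarith [hra.2]) hm4 hmra
        omega
      · -- s = t < 1
        obtain ⟨rb, hrb, hrb0⟩ := root_between P (by norm_num : (1:ℝ) ≤ 10) hP1 hP10
        have hmrb : 1 ≤ P.rootMultiplicity rb :=
          (Polynomial.rootMultiplicity_pos hP0).2 hrb0
        have := card_roots_ge2 P hP0 s rb 3 1 (by
          intro hh; rw [hh] at hs2'; linarith [hrb.1]) hm3 hmrb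
        omega
    · -- s < t
      have hm2 : 2 ≤ P.rootMultiplicity t := by
        apply mult_of_derivs P hP0 t 2 (by norm_num)
        intro j hj
        interval_cases j
        · simpa using hPt
        · simpa using hpt
      obtain ⟨ra, hra, hra0⟩ := root_between' P hs1 hPm1 hPs
      have hmra : 1 ≤ P.rootMultiplicity ra :=
        (Polynomial.rootMultiplicity_pos hP0).2 hra0
      rcases ht2.eq_or_lt with rfl | ht2'
      · -- t = 1
        have hds : (derivative (derivative P)).eval 1 = 0 := by
          have h2 : derivative (derivative P) =
              derivative ((X - C 1) * (X - C s) * (X - C 1) * (X + C 1)) := by rw [hd]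
          rw [h2, dp_eval]; ring
        have hm3 : 3 ≤ P.rootMultiplicity 1 := by
          apply mult_of_derivs P hP0 1 3 (by norm_num)
          intro j hj
          interval_cases j
          · simpa using hPt
          · simpa using hpt
          · simpa [Function.iterate_succ_apply', Function.iterate_one] using hds
        have := card_roots_ge2 P hP0 1 ra 3 1 (by
          intro hh; rw [← hh] at hra; linarith [hra.2]) hm3 hmra
        omega
      · -- t < 1
        obtain ⟨rb, hrb, hrb0⟩ := root_between P (by norm_num : (1:ℝ) ≤ 10) hP1 hP10
        have hmrb : 1 ≤ P.rootMultiplicity rb :=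
          (Polynomial.rootMultiplicity_pos hP0).2 hrb0
        have := card_roots_ge P hP0 t ra rb 2 1 1
          (by intro hh; rw [hh] at hslt; linarith [hra.2])
          (by intro hh; rw [hh] at ht2'; linarith [hrb.1])
          (by intro hh; rw [hh] at hra; linarith [hra.2, hrb.1, hslt, ht2'])
          hm2 hmra hmrb
        omega
  · -- Case B : P vanishes at -1
    set P : ℝ[X] := Fp s t + C (-(Fp s t).eval (-1)) with hP
    have hd : derivative P = (X - C 1) * (X - C s) * (X - C t) * (X + C 1) := by
      rw [hP, derivative_add, derivative_C, add_zero, deriv_Fp]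
    have hPeval : ∀ x : ℝ, P.eval x = (Fp s t).eval x - (Fp s t).eval (-1) := by
      intro x; rw [hP]; simp; ring
    have hdeg : P.natDegree = 5 := Fp_natdeg s t _
    have hP0 : P ≠ 0 := by
      intro h0
      have := Fp_coeff5 s t (-(Fp s t).eval (-1))
      rw [← hP, h0] at this
      simp at this
    have hPm1 : P.eval (-1) = 0 := by rw [hPeval]; ring
    have hpm1 : (derivative P).eval (-1) = 0 := by rw [hd, peval]; ring
    have hPt : 0 ≤ P.eval t := by rw [hPeval]; linarith
    have hPs : P.eval s ≤ 0 := by rw [hPeval]; linarith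
    have hP1 : P.eval 1 ≤ 0 := by rw [hPeval]; linarith [hF1m1, h]
    have hP10 : 0 ≤ P.eval 10 := by
      rw [hPeval]
      have := F10 s t (-1) hs1 hs2 ht1 ht2 (by norm_num) (by norm_num)
      linarith
    refine ⟨P, hd, ?_⟩
    apply hyp_of_card P hdeg
    have hm2 : 2 ≤ P.rootMultiplicity (-1) := by
      apply mult_of_derivs P hP0 (-1) 2 (by norm_num)
      intro j hj
      interval_cases j
      · simpa using hPm1
      · simpa using hpm1
    rcases hs1.eq_or_lt with hseq | hs1'
    · -- s = -1
      have hds : (derivative (derivative P)).eval (-1) = 0 := by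
        have h2 : derivative (derivative P) =
            derivative ((X - C 1) * (X - C s) * (X - C t) * (X + C 1)) := by rw [hd]
        rw [h2, dp_eval, ← hseq]; ring
      have hm3 : 3 ≤ P.rootMultiplicity (-1) := by
        apply mult_of_derivs P hP0 (-1) 3 (by norm_num)
        intro j hj
        interval_cases j
        · simpa using hPm1
        · simpa using hpm1
        · simpa [Function.iterate_succ_apply', Function.iterate_one] using hds
      obtain ⟨rb, hrb, hrb0⟩ := root_between P (by norm_num : (1:ℝ) ≤ 10) hP1 hP10
      have hmrb : 1 ≤ P.rootMultiplicity rb :=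
        (Polynomial.rootMultiplicity_pos hP0).2 hrb0
      have := card_roots_ge2 P hP0 (-1) rb 3 1 (by
        intro hh; rw [← hh] at hrb; linarith [hrb.1]) hm3 hmrb
      omega
    · rcases ht2.eq_or_lt with rfl | ht2'
      · -- t = 1
        have hP1' : P.eval 1 = 0 := le_antisymm hP1 hPt
        have hp1 : (derivative P).eval 1 = 0 := by rw [hd, peval]; ring
        have hm2' : 2 ≤ P.rootMultiplicity 1 := by
          apply mult_of_derivs P hP0 1 2 (by norm_num)
          intro j hj
          interval_cases j
          · simpa using hP1'
          · simpa using hp1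
        have := card_roots_ge2 P hP0 (-1) 1 2 2 (by norm_num) hm2 hm2'
        omega
      · -- t < 1
        obtain ⟨rc, hrc, hrc0⟩ := root_between P hst hPs hPt
        have hmrc : 1 ≤ P.rootMultiplicity rc :=
          (Polynomial.rootMultiplicity_pos hP0).2 hrc0
        obtain ⟨rb, hrb, hrb0⟩ := root_between P (by norm_num : (1:ℝ) ≤ 10) hP1 hP10
        have hmrb : 1 ≤ P.rootMultiplicity rb :=
          (Polynomial.rootMultiplicity_pos hP0).2 hrb0
        have := card_roots_ge P hP0 (-1) rc rb 2 1 1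
          (by intro hh; rw [← hh] at hrc; linarith [hrc.1])
          (by intro hh; rw [← hh] at hrb; linarith [hrb.1])
          (by intro hh; rw [hh] at hrc; linarith [hrc.2, hrb.1])
          hm2 hmrc hmrb
        omega

theorem stmt_5 (s t : ℝ) (hs : s ∈ Set.Icc (-1 : ℝ) 1) (ht : t ∈ Set.Icc (-1 : ℝ) 1)
    (p : Polynomial ℝ)
    (hp : p = (X - C 1) * (X - C s) * (X - C t) * (X + C 1)) :
    (∃ P : Polynomial ℝ, derivative P = p ∧ Hyperbolic P) ↔ s * t ≥ -(1 / 5) := by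
  obtain ⟨hs1, hs2⟩ := hs
  obtain ⟨ht1, ht2⟩ := ht
  constructor
  · rintro ⟨P, hd, hyp⟩
    have := reverse_dir s t hs1 hs2 ht1 ht2 P (by rw [← hp]; exact hd) hyp
    linarith
  · intro hge
    rcases le_total s t with hst | hst
    · obtain ⟨P, hd, hyp⟩ := forward_dir s t hs1 hs2 ht1 ht2 hst (by linarith)
      refine ⟨P, ?_, hyp⟩
      rw [hp, hd]
    · obtain ⟨P, hd, hyp⟩ := forward_dir t s ht1 ht2 hs1 hs2 hst (by linarith)
      refine ⟨P, ?_, hyp⟩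
      rw [hp, hd]
      ring
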